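/- For every real X > 0, |R₂*(X)| ≤ 1 + 2γ + R₃(X) + 2|R₄(X)|, where R₂*(X) = ∑_{n ≤ X}(Λ⋆Λ(n) − Λ(n)·log n + 2γ), R₃(X) = 2√X·|√X·r(√X) − R(√X)| + R(√X)² + |R(X)|·log X + |∫₁^X R(t)/t dt|, and R₄(X) = ∑_{n ≤ √X} Λ(n)·R(X/n). -/

import Mathlib

open Finset Real ArithmeticFunction

noncomputable def psi (X : ℝ) : ℝ := ∑ n ∈ Finset.Icc 1 ⌊X⌋₊, Λ n

noncomputable def psiTilde (X : ℝ) : ℝ := ∑ n ∈ Finset.Icc 1 ⌊X⌋₊, Λ n / n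

noncomputable def Rf (X : ℝ) : ℝ := psi X - X

noncomputable def rf (X : ℝ) : ℝ :=
  psiTilde X - Real.log X + Real.eulerMascheroniConstant

/-- Dirichlet convolution `Λ ⋆ Λ`. -/
noncomputable def LamLam (k : ℕ) : ℝ := ∑ d ∈ k.divisors, Λ d * Λ (k / d)

noncomputable def R2star (X : ℝ) : ℝ :=
  ∑ n ∈ Finset.Icc 1 ⌊X⌋₊,
    (LamLam n - Λ n * Real.log n + 2 * Real.eulerMascheroniConstant)

noncomputable def R3 (X : ℝ) : ℝ :=
  2 * Real.sqrt X * |Real.sqrt X * rf (Real.sqrt X) - Rf (Real.sqrt X)|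
    + Rf (Real.sqrt X) ^ 2 + |Rf X| * Real.log X + |∫ t in (1:ℝ)..X, Rf t / t|

noncomputable def R4 (X : ℝ) : ℝ :=
  ∑ n ∈ Finset.Icc 1 ⌊Real.sqrt X⌋₊, Λ n * Rf (X / n)

open MeasureTheory

lemma psi_mono : Monotone psi := fun _ _ hab =>
  Finset.sum_le_sum_of_subset_of_nonneg
    (Finset.Icc_subset_Icc_right (Nat.floor_le_floor hab))
    (fun _ _ _ => vonMangoldt_nonneg)

lemma psi_nonneg (t : ℝ) : 0 ≤ psi t :=
  Finset.sum_nonneg fun _ _ => vonMangoldt_nonneg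

lemma sum_Icc0 (g : ℕ → ℝ) (h0 : g 0 = 0) (n : ℕ) :
    ∑ k ∈ Icc 0 n, g k = ∑ k ∈ Icc 1 n, g k := by
  rw [Finset.Icc_eq_cons_Ioc (Nat.zero_le n), Finset.sum_cons, h0, zero_add,
    ← Finset.Icc_add_one_left_eq_Ioc, zero_add]

lemma sum_log_eq (X : ℝ) : ∑ n ∈ Icc 1 ⌊X⌋₊, Λ n * Real.log n =
      psi X * Real.log X - ∫ t in Set.Ioc (1:ℝ) X, t⁻¹ * psi t := by
  have h := sum_mul_eq_sub_integral_mul₀ (fun n => (Λ n : ℝ)) (by simp) X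
    (fun t ht => Real.differentiableAt_log (ne_of_gt (lt_of_lt_of_le zero_lt_one ht.1)))
    (by
      rw [Real.deriv_log']
      exact (ContinuousOn.integrableOn_Icc (fun t ht => (continuousAt_inv₀
        (ne_of_gt (lt_of_lt_of_le zero_lt_one ht.1))).continuousWithinAt)))
  simp only [Real.deriv_log'] at h
  rw [sum_Icc0 (fun k => Real.log k * Λ k) (by simp) ⌊X⌋₊,
    sum_Icc0 (fun k => (Λ k : ℝ)) (by simp) ⌊X⌋₊] at h
  have h2 : ∀ t : ℝ, (∑ k ∈ Icc 0 ⌊t⌋₊, (Λ k : ℝ)) = psi t := fun t =>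
    sum_Icc0 (fun k => (Λ k : ℝ)) (by simp) ⌊t⌋₊
  simp only [h2] at h
  simpa [psi, mul_comm] using h

lemma psi_int (X : ℝ) (hX : 1 ≤ X) :
    IntervalIntegrable (fun t => psi t * t⁻¹) volume 1 X := by
  rw [intervalIntegrable_iff_integrableOn_Ioc_of_le hX]
  apply Measure.integrableOn_of_bounded (M := psi X) (by simp)
    ((psi_mono.measurable.aemeasurable.mul measurable_inv.aemeasurable).aestronglyMeasurable)
  rw [ae_restrict_iff' measurableSet_Ioc]
  filter_upwards with t ht
  have h1 : (0:ℝ) < t := lt_trans zero_lt_one ht.1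
  have h2 : t⁻¹ ≤ 1 := by rw [inv_le_one_iff₀]; right; exact ht.1.le
  have h3 : 0 ≤ psi t := psi_nonneg t
  have h4 : psi t ≤ psi X := psi_mono ht.2
  rw [Real.norm_eq_abs, Pi.mul_apply, abs_of_nonneg (mul_nonneg h3 (inv_nonneg.mpr h1.le))]
  calc psi t * t⁻¹ ≤ psi t * 1 := mul_le_mul_of_nonneg_left h2 h3
    _ ≤ psi X := by linarith

lemma eqon (X : ℝ) :
    Set.EqOn (fun t => psi t * t⁻¹ - 1) (fun t => Rf t / t) (Set.Ioc 1 X) := by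
  intro t ht
  have h1 : (0:ℝ) < t := lt_trans zero_lt_one ht.1
  simp only [Rf]
  field_simp

lemma Rf_div_int (X : ℝ) (hX : 1 ≤ X) :
    IntervalIntegrable (fun t => Rf t / t) volume 1 X := by
  rw [intervalIntegrable_iff_integrableOn_Ioc_of_le hX]
  exact ((intervalIntegrable_iff_integrableOn_Ioc_of_le hX).mp
    ((psi_int X hX).sub intervalIntegrable_const)).congr_fun (eqon X) measurableSet_Ioc

lemma int_Rf (X : ℝ) (hX : 1 ≤ X) :
    ∫ t in (1:ℝ)..X, Rf t / t =
      (∫ t in Set.Ioc (1:ℝ) X, t⁻¹ * psi t) - (X - 1) := by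
  have h0 : ∫ t in (1:ℝ)..X, Rf t / t = ∫ t in (1:ℝ)..X, (psi t * t⁻¹ - 1) := by
    rw [intervalIntegral.integral_of_le hX, intervalIntegral.integral_of_le hX]
    exact setIntegral_congr_fun measurableSet_Ioc (eqon X).symm
  rw [h0, intervalIntegral.integral_sub (psi_int X hX) intervalIntegrable_const,
    intervalIntegral.integral_const, intervalIntegral.integral_of_le hX]
  simp only [smul_eq_mul, mul_one]
  congr 1
  exact setIntegral_congr_fun measurableSet_Ioc (fun t _ => mul_comm _ _)

lemma hyperbola (X : ℝ) (hX : 1 ≤ X) :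
    ∑ n ∈ Icc 1 ⌊X⌋₊, LamLam n =
      2 * (∑ a ∈ Icc 1 ⌊Real.sqrt X⌋₊, Λ a * psi (X / a)) - psi (Real.sqrt X) ^ 2 := by
  have hX0 : (0:ℝ) ≤ X := by linarith
  set N := ⌊X⌋₊ with hN
  set M := ⌊Real.sqrt X⌋₊ with hM
  have hNX : (N:ℝ) ≤ X := Nat.floor_le hX0
  have hsq : Real.sqrt X * Real.sqrt X = X := Real.mul_self_sqrt hX0
  have hs0 : (0:ℝ) ≤ Real.sqrt X := Real.sqrt_nonneg X
  have hMs : (M:ℝ) ≤ Real.sqrt X := Nat.floor_le hs0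
  have hsX : Real.sqrt X ≤ X := by
    nlinarith [Real.sqrt_nonneg X]
  have hMN : M ≤ N := Nat.floor_le_floor hsX
  -- the multiplication ↔ floor facts
  have hmulN : ∀ a b : ℕ, 0 < a → (a * b ≤ N ↔ (b:ℝ) ≤ X / a) := by
    intro a b ha
    rw [hN, Nat.le_floor_iff hX0, le_div_iff₀ (by exact_mod_cast ha), Nat.cast_mul]
    constructor <;> intro h <;> nlinarith
  set P := ((Icc 1 N ×ˢ Icc 1 N).filter (fun p : ℕ × ℕ => p.1 * p.2 ≤ N)) with hP
  -- Step 1 : sum of LamLam over Icc = sum over P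
  have step1 : ∑ n ∈ Icc 1 N, LamLam n = ∑ p ∈ P, Λ p.1 * Λ p.2 := by
    have h1 : ∀ n, LamLam n = ∑ p ∈ n.divisorsAntidiagonal, Λ p.1 * Λ p.2 := by
      intro n; rw [LamLam, ← Nat.sum_divisorsAntidiagonal (fun a b => Λ a * Λ b)]
    simp only [h1]
    rw [← Finset.sum_biUnion]
    · apply Finset.sum_congr _ (fun _ _ => rfl)
      ext p
      simp only [Finset.mem_biUnion, Nat.mem_divisorsAntidiagonal, hP, Finset.mem_filter,
        Finset.mem_product, Finset.mem_Icc]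
      constructor
      · rintro ⟨n, ⟨hn1, hn2⟩, hpn, -⟩
        have hp1 : 1 ≤ p.1 := Nat.one_le_iff_ne_zero.mpr (by rintro h; rw [h] at hpn; omega)
        have hp2 : 1 ≤ p.2 := Nat.one_le_iff_ne_zero.mpr (by rintro h; rw [h] at hpn; simp at hpn; omega)
        refine ⟨⟨⟨hp1, ?_⟩, hp2, ?_⟩, by omega⟩
        · calc p.1 ≤ p.1 * p.2 := Nat.le_mul_of_pos_right _ hp2
            _ ≤ N := by omega
        · calc p.2 ≤ p.1 * p.2 := Nat.le_mul_of_pos_left _ hp1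
            _ ≤ N := by omega
      · rintro ⟨⟨⟨hp1, -⟩, hp2, -⟩, hle⟩
        exact ⟨p.1 * p.2, ⟨Nat.mul_pos hp1 hp2, hle⟩, rfl, Nat.pos_iff_ne_zero.mp (Nat.mul_pos hp1 hp2)⟩
    · intro m _ n _ hmn
      apply Finset.disjoint_left.mpr
      intro p hp hp'
      exact hmn (((Nat.mem_divisorsAntidiagonal.mp hp).1.symm).trans
        (Nat.mem_divisorsAntidiagonal.mp hp').1)
  have memP : ∀ p : ℕ × ℕ, p ∈ P ↔ (1 ≤ p.1 ∧ 1 ≤ p.2 ∧ p.1 * p.2 ≤ N) := by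
    intro p
    simp only [hP, Finset.mem_filter, Finset.mem_product, Finset.mem_Icc]
    constructor
    · rintro ⟨⟨⟨h1, -⟩, h2, -⟩, h3⟩; exact ⟨h1, h2, h3⟩
    · rintro ⟨h1, h2, h3⟩
      exact ⟨⟨⟨h1, le_trans (Nat.le_mul_of_pos_right _ h2) h3⟩,
        h2, le_trans (Nat.le_mul_of_pos_left _ h1) h3⟩, h3⟩
  -- key fact: in P, if p.1 > M then p.2 ≤ M
  have keyfact : ∀ p : ℕ × ℕ, p ∈ P → ¬ p.1 ≤ M → p.2 ≤ M := by
    intro p hp hnp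
    obtain ⟨hp1, hp2, hle⟩ := (memP p).mp hp
    by_contra hnp2
    have h1 : Real.sqrt X < p.1 := (Nat.floor_lt hs0).mp (by omega)
    have h2 : Real.sqrt X < p.2 := (Nat.floor_lt hs0).mp (by omega)
    have h3 : ((p.1 * p.2 : ℕ) : ℝ) ≤ X := le_trans (by exact_mod_cast Nat.cast_le.mpr hle) hNX
    push_cast at h3
    nlinarith
  have memM : ∀ a b : ℕ, a ≤ M → b ≤ M → a * b ≤ N := by
    intro a b ha hb
    rw [hN, Nat.le_floor_iff hX0]
    push_cast
    calc (a:ℝ) * b ≤ Real.sqrt X * Real.sqrt X := by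
          apply mul_le_mul _ _ (by positivity) hs0
          · exact le_trans (by exact_mod_cast Nat.cast_le.mpr ha) hMs
          · exact le_trans (by exact_mod_cast Nat.cast_le.mpr hb) hMs
      _ = X := hsq
  have e2 : P.filter (fun p => p.2 ≤ M ∧ p.1 ≤ M) = (Icc 1 M ×ˢ Icc 1 M) := by
    ext p
    simp only [Finset.mem_filter, memP, Finset.mem_product, Finset.mem_Icc]
    constructor
    · tauto
    · intro h
      have := memM p.1 p.2 h.1.2 h.2.2
      tauto
  -- splitting
  have split : ∑ p ∈ P, Λ p.1 * Λ p.2 =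
      (∑ p ∈ P.filter (fun p => p.1 ≤ M), Λ p.1 * Λ p.2)
      + (∑ p ∈ P.filter (fun p => p.2 ≤ M), Λ p.1 * Λ p.2)
      - (∑ p ∈ (Icc 1 M ×ˢ Icc 1 M), Λ p.1 * Λ p.2) := by
    have e1 : P.filter (fun p => ¬ p.1 ≤ M) = P.filter (fun p => p.2 ≤ M ∧ ¬ p.1 ≤ M) :=
      Finset.filter_congr (fun p hp => ⟨fun h => ⟨keyfact p hp h, h⟩, fun h => h.2⟩)
    have t1 := Finset.sum_filter_add_sum_filter_not P (fun p : ℕ × ℕ => p.1 ≤ M)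
      (fun p => Λ p.1 * Λ p.2)
    have t2 := Finset.sum_filter_add_sum_filter_not (P.filter (fun p => p.2 ≤ M))
      (fun p : ℕ × ℕ => p.1 ≤ M) (fun p => Λ p.1 * Λ p.2)
    simp only [Finset.filter_filter] at t2
    rw [← e1, e2] at t2
    linarith
  -- Q1 evaluation
  have evalQ1 : ∑ p ∈ P.filter (fun p => p.1 ≤ M), Λ p.1 * Λ p.2 =
      ∑ a ∈ Icc 1 M, Λ a * psi (X / a) := by
    have e3 : P.filter (fun p : ℕ × ℕ => p.1 ≤ M) =
        ((Icc 1 M ×ˢ Icc 1 N).filter (fun p : ℕ × ℕ => p.1 * p.2 ≤ N)) := by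
      ext p
      simp only [Finset.mem_filter, memP, Finset.mem_product, Finset.mem_Icc]
      constructor
      · rintro ⟨⟨h1, h2, h3⟩, h4⟩
        exact ⟨⟨⟨h1, h4⟩, h2, le_trans (Nat.le_mul_of_pos_left _ h1) h3⟩, h3⟩
      · rintro ⟨⟨⟨h1, h2⟩, h3, -⟩, h4⟩
        exact ⟨⟨h1, h3, h4⟩, h2⟩
    rw [e3, Finset.sum_filter, Finset.sum_product]
    apply Finset.sum_congr rfl
    intro a ha
    simp only [Finset.mem_Icc] at ha
    have ha1 : 0 < a := ha.1
    rw [← Finset.sum_filter]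
    have e4 : (Icc 1 N).filter (fun b => a * b ≤ N) = Icc 1 ⌊X / (a:ℝ)⌋₊ := by
      ext b
      simp only [Finset.mem_filter, Finset.mem_Icc]
      constructor
      · rintro ⟨⟨h1, -⟩, h2⟩
        exact ⟨h1, Nat.le_floor ((hmulN a b ha1).mp h2)⟩
      · rintro ⟨h1, h2⟩
        have h2' : (b:ℝ) ≤ X / a :=
          le_trans (Nat.cast_le.mpr h2) (Nat.floor_le (by positivity))
        have h3 := (hmulN a b ha1).mpr h2'
        exact ⟨⟨h1, le_trans (Nat.le_mul_of_pos_left _ ha1) h3⟩, h3⟩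
    rw [e4, psi, Finset.mul_sum]
  -- Q2 = Q1 by symmetry
  have evalQ2 : ∑ p ∈ P.filter (fun p => p.2 ≤ M), Λ p.1 * Λ p.2 =
      ∑ p ∈ P.filter (fun p => p.1 ≤ M), Λ p.1 * Λ p.2 := by
    apply Finset.sum_nbij' (i := Prod.swap) (j := Prod.swap)
    · intro p hp
      simp only [Finset.mem_filter, memP, Prod.fst_swap, Prod.snd_swap] at hp ⊢
      obtain ⟨⟨h1, h2, h3⟩, h4⟩ := hp
      exact ⟨⟨h2, h1, by rwa [Nat.mul_comm]⟩, h4⟩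
    · intro p hp
      simp only [Finset.mem_filter, memP, Prod.fst_swap, Prod.snd_swap] at hp ⊢
      obtain ⟨⟨h1, h2, h3⟩, h4⟩ := hp
      exact ⟨⟨h2, h1, by rwa [Nat.mul_comm]⟩, h4⟩
    · intro p _; rfl
    · intro p _; rfl
    · intro p _; exact mul_comm _ _
  -- the intersection term
  have evalsq : ∑ p ∈ (Icc 1 M ×ˢ Icc 1 M), Λ p.1 * Λ p.2 = psi (Real.sqrt X) ^ 2 := by
    rw [Finset.sum_product, psi, ← hM, sq, Finset.sum_mul_sum]
  rw [step1, split, evalQ2, evalQ1, evalsq]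
  ring

lemma key_identity (X : ℝ) (hX : 1 ≤ X) :
    R2star X = 2 * Real.eulerMascheroniConstant * ((⌊X⌋₊:ℝ) - X) - 1
      + 2 * Real.sqrt X * (Real.sqrt X * rf (Real.sqrt X) - Rf (Real.sqrt X))
      - Rf (Real.sqrt X) ^ 2 - Rf X * Real.log X
      + (∫ t in (1:ℝ)..X, Rf t / t) + 2 * R4 X := by
  have hX0 : (0:ℝ) ≤ X := by linarith
  set s := Real.sqrt X with hs
  have h7 : s * s = X := Real.mul_self_sqrt hX0
  have hR2 : R2star X = (∑ n ∈ Icc 1 ⌊X⌋₊, LamLam n)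
      - (∑ n ∈ Icc 1 ⌊X⌋₊, Λ n * Real.log n)
      + (⌊X⌋₊:ℝ) * (2 * Real.eulerMascheroniConstant) := by
    rw [R2star, Finset.sum_add_distrib, Finset.sum_sub_distrib, Finset.sum_const,
      Nat.card_Icc, Nat.add_sub_cancel, nsmul_eq_mul]
  have h1 := hyperbola X hX
  have h2 : (∑ a ∈ Icc 1 ⌊s⌋₊, Λ a * psi (X / a)) = X * psiTilde s + R4 X := by
    rw [psiTilde, R4, Finset.mul_sum, ← Finset.sum_add_distrib]
    apply Finset.sum_congr rfl
    intro a _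
    rw [Rf]
    ring
  have h3 : psiTilde s = Real.log X / 2 - Real.eulerMascheroniConstant + rf s := by
    have hl : Real.log s = Real.log X / 2 := Real.log_sqrt hX0
    have hr : rf s = psiTilde s - Real.log s + Real.eulerMascheroniConstant := rfl
    linarith
  have h4 : psi s ^ 2 = (s + Rf s) ^ 2 := by rw [Rf]; ring
  have h5 := sum_log_eq X
  have h6 := int_Rf X hX
  have h8 : psi X = X + Rf X := by rw [Rf]; ring
  linear_combination hR2 + h1 + 2*h2 + 2*X*h3 - h4 - h5 - h6
    - Real.log X * h8 - (2 * rf s + 1) * h7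

theorem stmt5 (X : ℝ) (hX : 0 < X) :
    |R2star X| ≤ 1 + 2 * Real.eulerMascheroniConstant + R3 X + 2 * |R4 X| := by
  have hγ : (0:ℝ) ≤ Real.eulerMascheroniConstant := by
    linarith [Real.one_half_lt_eulerMascheroniConstant]
  rcases le_or_gt 1 X with hX1 | hX1
  · -- main case
    have hL : 0 ≤ Real.log X := Real.log_nonneg hX1
    have hs0 : 0 ≤ Real.sqrt X := Real.sqrt_nonneg X
    have hNX : (⌊X⌋₊:ℝ) ≤ X := Nat.floor_le (by linarith)
    have hXN : X - 1 ≤ (⌊X⌋₊:ℝ) := by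
      have := Nat.lt_floor_add_one X
      linarith
    set I := ∫ t in (1:ℝ)..X, Rf t / t with hI
    set D := Real.sqrt X * rf (Real.sqrt X) - Rf (Real.sqrt X) with hD
    have key := key_identity X hX1
    have hb1 : 2 * Real.sqrt X * D ≤ 2 * Real.sqrt X * |D| :=
      mul_le_mul_of_nonneg_left (le_abs_self D) (by positivity)
    have hb1' : -(2 * Real.sqrt X * |D|) ≤ 2 * Real.sqrt X * D := by
      have := mul_le_mul_of_nonneg_left (neg_abs_le D) (show (0:ℝ) ≤ 2 * Real.sqrt X by positivity)
      linarith
    have hb2 : Rf X * Real.log X ≤ |Rf X| * Real.log X :=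
      mul_le_mul_of_nonneg_right (le_abs_self _) hL
    have hb2' : -(|Rf X| * Real.log X) ≤ Rf X * Real.log X := by
      have := mul_le_mul_of_nonneg_right (neg_abs_le (Rf X)) hL
      linarith
    have hb3 : 2 * Real.eulerMascheroniConstant * ((⌊X⌋₊:ℝ) - X) ≤ 0 := by nlinarith
    have hb3' : -(2 * Real.eulerMascheroniConstant)
        ≤ 2 * Real.eulerMascheroniConstant * ((⌊X⌋₊:ℝ) - X) := by nlinarith
    have hbI := abs_nonneg I
    have hbI1 := le_abs_self I
    have hbI2 := neg_abs_le I
    have hbR4 := le_abs_self (R4 X)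
    have hbR4' := neg_abs_le (R4 X)
    have hR3 : R3 X = 2 * Real.sqrt X * |D| + Rf (Real.sqrt X) ^ 2
        + |Rf X| * Real.log X + |I| := rfl
    rw [abs_le]
    constructor
    · rw [key]; rw [hR3]; nlinarith [sq_nonneg (Rf (Real.sqrt X))]
    · rw [key]; rw [hR3]; nlinarith [sq_nonneg (Rf (Real.sqrt X))]
  · -- case X < 1
    have hfl : ⌊X⌋₊ = 0 := Nat.floor_eq_zero.mpr hX1
    have hR2 : R2star X = 0 := by
      rw [R2star, hfl]
      simp
    have hsfl : ⌊Real.sqrt X⌋₊ = 0 := Nat.floor_eq_zero.mpr (by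
      rw [show (1:ℝ) = Real.sqrt 1 by simp]
      exact Real.sqrt_lt_sqrt hX.le hX1)
    have hpsiX : psi X = 0 := by rw [psi, hfl]; simp
    have hpsis : psi (Real.sqrt X) = 0 := by rw [psi, hsfl]; simp
    have hRfX : Rf X = -X := by rw [Rf, hpsiX]; ring
    -- X log X ≥ X - 1
    have hlog : X - 1 ≤ X * Real.log X := by
      have h := Real.log_le_sub_one_of_pos (show (0:ℝ) < X⁻¹ by positivity)
      rw [Real.log_inv] at h
      have hXX : X * X⁻¹ = 1 := mul_inv_cancel₀ (ne_of_gt hX)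
      nlinarith
    have hR3 : -1 ≤ R3 X := by
      have e1 : 0 ≤ 2 * Real.sqrt X *
          |Real.sqrt X * rf (Real.sqrt X) - Rf (Real.sqrt X)| := by positivity
      have e2 : 0 ≤ Rf (Real.sqrt X) ^ 2 := sq_nonneg _
      have e3 : |Rf X| * Real.log X = X * Real.log X := by
        rw [hRfX, abs_neg, abs_of_pos hX]
      have e4 : (0:ℝ) ≤ |∫ t in (1:ℝ)..X, Rf t / t| := abs_nonneg _
      rw [R3, e3]
      linarith
    rw [hR2, abs_zero]
    have := abs_nonneg (R4 X)
    linarith
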